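/- Let p ∈ ℝ² with p ≠ 0, and set p₀ = √(1+|p|²) and p̂ = p/p₀ (so 0 < |p̂| < 1). Then the integral over the closed unit disc satisfies ∫_{|ξ|≤1} (1 + p̂·ξ)^{-3/2} (1 - |ξ|²)^{-1/2} dξ = (2π/|p̂|) · ( 1/√(1-|p̂|) − 1/√(1+|p̂|) ), where the integral is taken with respect to two-dimensional Lebesgue measure in ξ ∈ ℝ². -/

import Mathlib

set_option maxHeartbeats 1000000

open MeasureTheory RealInnerProductSpace

section Aux
open Real Set intervalIntegral

lemma aux_intInt (c : ℝ) (hc : 0 < c) :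
    IntervalIntegrable (fun y : ℝ => (c^2 - y^2) ^ (-(1:ℝ)/2)) volume (-c) c := by
  have hmeas : Measurable (fun y : ℝ => (c^2 - y^2) ^ (-(1:ℝ)/2)) := by fun_prop
  have h1 : IntervalIntegrable (fun y : ℝ => (c^2 - y^2) ^ (-(1:ℝ)/2)) volume 0 c := by
    have hg : IntervalIntegrable (fun y : ℝ => c ^ (-(1:ℝ)/2) * (c - y) ^ (-(1:ℝ)/2)) volume 0 c := by
      have h := (intervalIntegrable_rpow' (a := c) (b := 0)
        (by norm_num : (-1:ℝ) < -(1:ℝ)/2)).comp_sub_left c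
      simpa using h.const_mul (c ^ (-(1:ℝ)/2))
    refine hg.mono_fun hmeas.aestronglyMeasurable ?_
    rw [uIoc_of_le hc.le]
    filter_upwards [ae_restrict_mem measurableSet_Ioc] with y hy
    have hy0 : 0 < y := hy.1
    have hyc : y ≤ c := hy.2
    have hb : (0:ℝ) ≤ c^2 - y^2 := by nlinarith
    have hrhs : (0:ℝ) ≤ c ^ (-(1:ℝ)/2) * (c - y) ^ (-(1:ℝ)/2) :=
      mul_nonneg (rpow_nonneg hc.le _) (rpow_nonneg (by linarith) _)
    rw [Real.norm_eq_abs, Real.norm_eq_abs, abs_of_nonneg (rpow_nonneg hb _),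
      abs_of_nonneg hrhs]
    rcases eq_or_lt_of_le hyc with heq | hlt
    · rw [heq]
      simp [sub_self, Real.zero_rpow (show -(1:ℝ)/2 ≠ 0 by norm_num)]
    · have hpos : 0 < c * (c - y) := mul_pos hc (by linarith)
      have hle : c * (c - y) ≤ c^2 - y^2 := by nlinarith
      calc (c^2 - y^2) ^ (-(1:ℝ)/2) ≤ (c * (c - y)) ^ (-(1:ℝ)/2) :=
            Real.rpow_le_rpow_of_nonpos hpos hle (by norm_num)
        _ = c ^ (-(1:ℝ)/2) * (c - y) ^ (-(1:ℝ)/2) :=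
            Real.mul_rpow hc.le (by linarith)
  have h2 : IntervalIntegrable (fun y : ℝ => (c^2 - y^2) ^ (-(1:ℝ)/2)) volume (-c) 0 := by
    have h := (IntervalIntegrable.iff_comp_neg).mp h1
    simp only [neg_neg, neg_zero] at h
    have : (fun x : ℝ => (c^2 - (-x)^2) ^ (-(1:ℝ)/2)) = fun x : ℝ => (c^2 - x^2) ^ (-(1:ℝ)/2) := by
      funext x; rw [neg_pow]; norm_num
    rw [this] at h
    exact h.symm
  exact h2.trans h1

lemma aux_val (c : ℝ) (hc : 0 < c) :
    ∫ y in (-c)..c, (c^2 - y^2) ^ (-(1:ℝ)/2) = π := by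
  have hcont : ContinuousOn (fun y : ℝ => arcsin (y / c)) (Icc (-c) c) :=
    (Real.continuous_arcsin.comp (continuous_id.div_const c)).continuousOn
  have hderiv : ∀ y ∈ Ioo (-c) c, HasDerivWithinAt (fun y : ℝ => arcsin (y / c))
      ((c^2 - y^2) ^ (-(1:ℝ)/2)) (Ioi y) y := by
    intro y hy
    have hlt : y / c < 1 := (div_lt_one hc).mpr hy.2
    have hgt : -1 < y / c := by rw [lt_div_iff₀ hc]; nlinarith [hy.1]
    have hd := (Real.hasDerivAt_arcsin hgt.ne' hlt.ne).comp y ((hasDerivAt_id y).div_const c)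
    have hpos : 0 < c^2 - y^2 := by nlinarith [hy.1, hy.2]
    have hsq : 1 - (y/c)^2 = (c^2 - y^2)/c^2 := by field_simp
    have heq : 1 / √(1 - (y/c)^2) * (1 / c) = (c^2 - y^2) ^ (-(1:ℝ)/2) := by
      rw [hsq, Real.sqrt_div hpos.le, Real.sqrt_sq hc.le,
        show -(1:ℝ)/2 = -(1/2) by norm_num, Real.rpow_neg hpos.le, ← Real.sqrt_eq_rpow]
      have hs : √(c^2 - y^2) ≠ 0 := (Real.sqrt_pos.mpr hpos).ne'
      field_simp
    rw [← heq]
    exact hd.hasDerivWithinAt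
  rw [integral_eq_sub_of_hasDeriv_right_of_le (by linarith) hcont hderiv (aux_intInt c hc)]
  rw [div_self hc.ne', neg_div, div_self hc.ne', arcsin_one, arcsin_neg, arcsin_one]; ring

lemma aux_intIntC (a : ℝ) (ha0 : 0 < a) (ha1 : a < 1) :
    IntervalIntegrable (fun x : ℝ => (1 + a*x) ^ (-(3:ℝ)/2)) volume (-1) 1 := by
  apply ContinuousOn.intervalIntegrable
  intro x hx
  rw [uIcc_of_le (by norm_num : (-1:ℝ) ≤ 1)] at hx
  have hpos : 0 < 1 + a * x := by nlinarith [hx.1, hx.2]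
  have hca : ContinuousAt (fun x : ℝ => 1 + a * x) x := by fun_prop
  exact (hca.rpow_const (Or.inl hpos.ne')).continuousWithinAt

lemma aux_valC (a : ℝ) (ha0 : 0 < a) (ha1 : a < 1) :
    ∫ x in (-1:ℝ)..1, (1 + a*x) ^ (-(3:ℝ)/2) = 2/a * (1/√(1-a) - 1/√(1+a)) := by
  have hderiv : ∀ x ∈ uIcc (-1:ℝ) 1, HasDerivAt (fun x : ℝ => -2/a * (1 + a*x) ^ (-(1:ℝ)/2))
      ((1 + a*x) ^ (-(3:ℝ)/2)) x := by
    intro x hx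
    rw [uIcc_of_le (by norm_num : (-1:ℝ) ≤ 1)] at hx
    have hpos : 0 < 1 + a * x := by nlinarith [hx.1, hx.2]
    have hb : HasDerivAt (fun x : ℝ => 1 + a * x) a x := by
      simpa using ((hasDerivAt_id x).const_mul a).const_add 1
    have hd := ((Real.hasDerivAt_rpow_const (p := -(1:ℝ)/2) (Or.inl hpos.ne')).comp x hb).const_mul (-2/a)
    refine hd.congr_deriv ?_
    symm
    rw [show (-(1:ℝ)/2 - 1) = -(3:ℝ)/2 by norm_num]
    field_simp
  rw [integral_eq_sub_of_hasDerivAt hderiv (aux_intIntC a ha0 ha1)]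
  have h1 : (1:ℝ) + a * 1 = 1 + a := by ring
  have h2 : (1:ℝ) + a * (-1) = 1 - a := by ring
  rw [h1, h2]
  have e1 : ((1:ℝ) + a) ^ (-(1:ℝ)/2) = 1 / √(1+a) := by
    rw [show -(1:ℝ)/2 = -(1/2) by norm_num, Real.rpow_neg (by linarith), ← Real.sqrt_eq_rpow,
      one_div]
  have e2 : ((1:ℝ) - a) ^ (-(1:ℝ)/2) = 1 / √(1-a) := by
    rw [show -(1:ℝ)/2 = -(1/2) by norm_num, Real.rpow_neg (by linarith), ← Real.sqrt_eq_rpow,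
      one_div]
  rw [e1, e2]; ring

lemma aux_key (a : ℝ) (ha0 : 0 < a) (ha1 : a < 1) :
    (∫ ξ in Metric.closedBall (0 : EuclideanSpace ℝ (Fin 2)) 1,
      (1 + a * ξ 0) ^ (-(3:ℝ)/2) * (1 - ‖ξ‖^2) ^ (-(1:ℝ)/2))
    = 2 * π / a * (1/√(1-a) - 1/√(1+a)) := by
  set D : Set (ℝ×ℝ) := {z | z.1^2 + z.2^2 ≤ 1} with hD
  have hDmeas : MeasurableSet D :=
    measurableSet_le (by fun_prop) measurable_const
  set F : ℝ×ℝ → ℝ := fun z => (1 + a*z.1) ^ (-(3:ℝ)/2) * (1 - z.1^2 - z.2^2) ^ (-(1:ℝ)/2) with hF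
  have hFmeas : Measurable F := by fun_prop
  -- transfer to ℝ × ℝ
  have hφmp : MeasurePreserving (fun ξ : EuclideanSpace ℝ (Fin 2) => ((ξ 0 : ℝ), (ξ 1 : ℝ)))
      volume volume :=
    (volume_preserving_piFinTwo (fun _ : Fin 2 => ℝ)).comp
      (EuclideanSpace.volume_preserving_symm_measurableEquiv_toLp (Fin 2))
  have hφemb : MeasurableEmbedding (fun ξ : EuclideanSpace ℝ (Fin 2) => ((ξ 0 : ℝ), (ξ 1 : ℝ))) :=
    ((MeasurableEquiv.toLp 2 (Fin 2 → ℝ)).symm.trans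
      (MeasurableEquiv.piFinTwo fun _ => ℝ)).measurableEmbedding
  have hnorm : ∀ ξ : EuclideanSpace ℝ (Fin 2), ‖ξ‖^2 = ξ 0 ^ 2 + ξ 1 ^ 2 := by
    intro ξ
    rw [EuclideanSpace.norm_eq, Real.sq_sqrt (by positivity)]
    simp [Fin.sum_univ_two]
  have hball : Metric.closedBall (0 : EuclideanSpace ℝ (Fin 2)) 1
      = (fun ξ : EuclideanSpace ℝ (Fin 2) => ((ξ 0 : ℝ), (ξ 1 : ℝ))) ⁻¹' D := by
    ext ξ
    simp only [Metric.mem_closedBall, dist_zero_right, Set.mem_preimage, hD, Set.mem_setOf_eq]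
    constructor
    · intro h; nlinarith [hnorm ξ, norm_nonneg ξ]
    · intro h; nlinarith [hnorm ξ, norm_nonneg ξ]
  have step1 : (∫ ξ in Metric.closedBall (0 : EuclideanSpace ℝ (Fin 2)) 1,
      (1 + a * ξ 0) ^ (-(3:ℝ)/2) * (1 - ‖ξ‖^2) ^ (-(1:ℝ)/2)) = ∫ z in D, F z := by
    rw [hball]
    simp_rw [hnorm, ← sub_sub]
    exact hφmp.setIntegral_preimage_emb hφemb F D
  -- nonnegativity of the indicator
  have hind : ∀ z, 0 ≤ D.indicator F z := by
    intro z
    apply Set.indicator_nonneg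
    intro z hz
    have hz' : z.1^2 + z.2^2 ≤ 1 := hz
    have hz1 : -1 ≤ z.1 := by nlinarith [sq_nonneg z.2, sq_nonneg (z.1+1)]
    have hb1 : (0:ℝ) ≤ 1 + a * z.1 := by nlinarith [mul_nonneg ha0.le (by linarith : (0:ℝ) ≤ z.1 + 1)]
    have hb2 : (0:ℝ) ≤ 1 - z.1^2 - z.2^2 := by linarith
    exact mul_nonneg (Real.rpow_nonneg hb1 _) (Real.rpow_nonneg hb2 _)
  have step2 : (∫ z in D, F z) = (∫⁻ z, ENNReal.ofReal (D.indicator F z)).toReal := by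
    rw [← MeasureTheory.integral_indicator hDmeas,
      integral_eq_lintegral_of_nonneg_ae (Filter.Eventually.of_forall hind)
        (hFmeas.indicator hDmeas).aestronglyMeasurable]
  have step3 : (∫⁻ z, ENNReal.ofReal (D.indicator F z))
      = ∫⁻ x, ∫⁻ y, ENNReal.ofReal (D.indicator F (x, y)) := by
    rw [Measure.volume_eq_prod]
    exact lintegral_prod _ ((ENNReal.measurable_ofReal.comp
      (hFmeas.indicator hDmeas)).aemeasurable)
  have hae : ∀ᵐ x : ℝ, x ≠ -1 ∧ x ≠ 1 := by
    have hfin : (({-1, 1} : Set ℝ)).Finite := (Set.finite_singleton 1).insert (-1)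
    have h0 := hfin.measure_zero (volume : Measure ℝ)
    rw [ae_iff]
    refine measure_mono_null ?_ h0
    intro x hx
    simp only [Set.mem_setOf_eq, not_and_or, not_not] at hx
    simp only [Set.mem_insert_iff, Set.mem_singleton_iff]
    tauto
  have step4 : (fun x : ℝ => ∫⁻ y, ENNReal.ofReal (D.indicator F (x, y)))
      =ᵐ[volume] fun x => (Set.Ioo (-1:ℝ) 1).indicator
        (fun x => ENNReal.ofReal (π * (1 + a*x) ^ (-(3:ℝ)/2))) x := by
    filter_upwards [hae] with x hx
    have hxne : x^2 ≠ 1 := by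
      intro h
      have : (x - 1) * (x + 1) = 0 := by nlinarith
      rcases mul_eq_zero.mp this with h' | h'
      · exact hx.2 (by linarith)
      · exact hx.1 (by linarith)
    rcases lt_or_gt_of_ne hxne with hlt | hgt
    · -- |x| < 1
      have hx1 : -1 < x := by nlinarith
      have hx2 : x < 1 := by nlinarith
      have hx2pos : 0 < 1 - x^2 := by nlinarith
      set c := √(1 - x^2) with hc
      have hcpos : 0 < c := Real.sqrt_pos.mpr hx2pos
      have hcsq : c^2 = 1 - x^2 := Real.sq_sqrt hx2pos.le
      have hFx : ∀ y : ℝ, F (x, y) = (1 + a*x) ^ (-(3:ℝ)/2) * (c^2 - y^2) ^ (-(1:ℝ)/2) := by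
        intro y; rw [hF]; simp only; rw [hcsq]
      have hslice : (fun y : ℝ => ENNReal.ofReal (D.indicator F (x, y)))
          = fun y => (Set.Icc (-c) c).indicator (fun y => ENNReal.ofReal (F (x, y))) y := by
        funext y
        have hmem : (x, y) ∈ D ↔ y ∈ Set.Icc (-c) c := by
          simp only [hD, Set.mem_setOf_eq, Set.mem_Icc]
          constructor
          · intro h
            constructor <;> nlinarith [sq_nonneg (y - c), sq_nonneg (y + c)]
          · intro h; nlinarith [h.1, h.2]
        by_cases hy : (x, y) ∈ D
        · rw [Set.indicator_of_mem hy, Set.indicator_of_mem (hmem.mp hy)]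
        · rw [Set.indicator_of_notMem hy, Set.indicator_of_notMem (fun h => hy (hmem.mpr h)),
            ENNReal.ofReal_zero]
      have hIcc : IntegrableOn (fun y => F (x, y)) (Set.Icc (-c) c) := by
        rw [integrableOn_Icc_iff_integrableOn_Ioc]
        have h := ((aux_intInt c hcpos).const_mul ((1 + a*x) ^ (-(3:ℝ)/2))).1
        simp_rw [hFx]
        exact h
      have hnnF : 0 ≤ᵐ[volume.restrict (Set.Icc (-c) c)] fun y => F (x, y) := by
        filter_upwards [ae_restrict_mem measurableSet_Icc] with y hy
        rw [hFx y]
        have h1 : (0:ℝ) ≤ 1 + a * x := by nlinarith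
        have h2 : (0:ℝ) ≤ c^2 - y^2 := by nlinarith [hy.1, hy.2]
        exact mul_nonneg (Real.rpow_nonneg h1 _) (Real.rpow_nonneg h2 _)
      rw [hslice, lintegral_indicator measurableSet_Icc,
        ← ofReal_integral_eq_lintegral_ofReal hIcc hnnF]
      have hval : ∫ y in Set.Icc (-c) c, F (x, y) = π * (1 + a*x) ^ (-(3:ℝ)/2) := by
        simp_rw [hFx]
        rw [MeasureTheory.integral_Icc_eq_integral_Ioc,
          ← intervalIntegral.integral_of_le (by linarith : -c ≤ c),
          intervalIntegral.integral_const_mul, aux_val c hcpos]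
        ring
      rw [hval, Set.indicator_of_mem (Set.mem_Ioo.mpr ⟨hx1, hx2⟩)]
    · -- |x| > 1
      have hout : ∀ y : ℝ, (x, y) ∉ D := by
        intro y hy
        have : x^2 + y^2 ≤ 1 := hy
        nlinarith [sq_nonneg y]
      have hzero : (fun y : ℝ => ENNReal.ofReal (D.indicator F (x, y))) = fun _ => 0 := by
        funext y
        rw [Set.indicator_of_notMem (hout y), ENNReal.ofReal_zero]
      rw [hzero, lintegral_const, zero_mul,
        Set.indicator_of_notMem]
      intro hmem
      rcases Set.mem_Ioo.mp hmem with ⟨h1, h2⟩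
      nlinarith
  -- outer integral
  have hIoo : IntegrableOn (fun x : ℝ => π * (1 + a*x) ^ (-(3:ℝ)/2)) (Set.Ioo (-1:ℝ) 1) := by
    have h := ((aux_intIntC a ha0 ha1).const_mul π).1
    exact h.mono_set Set.Ioo_subset_Ioc_self
  have hnn2 : 0 ≤ᵐ[volume.restrict (Set.Ioo (-1:ℝ) 1)] fun x : ℝ => π * (1 + a*x) ^ (-(3:ℝ)/2) := by
    filter_upwards [ae_restrict_mem measurableSet_Ioo] with x hx
    have : (0:ℝ) ≤ 1 + a * x := by nlinarith [hx.1, hx.2]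
    exact mul_nonneg Real.pi_pos.le (Real.rpow_nonneg this _)
  have hvalO : ∫ x in Set.Ioo (-1:ℝ) 1, π * (1 + a*x) ^ (-(3:ℝ)/2)
      = π * (2/a * (1/√(1-a) - 1/√(1+a))) := by
    rw [← MeasureTheory.integral_Ioc_eq_integral_Ioo,
      ← intervalIntegral.integral_of_le (by linarith : (-1:ℝ) ≤ 1),
      intervalIntegral.integral_const_mul, aux_valC a ha0 ha1]
  have hvnn : 0 ≤ π * (2/a * (1/√(1-a) - 1/√(1+a))) := by
    have hs1 : 0 < √(1-a) := Real.sqrt_pos.mpr (by linarith)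
    have hs2 : √(1-a) ≤ √(1+a) := Real.sqrt_le_sqrt (by linarith)
    have : 1/√(1+a) ≤ 1/√(1-a) := one_div_le_one_div_of_le hs1 hs2
    have h2 : 0 ≤ 1/√(1-a) - 1/√(1+a) := by linarith
    positivity
  rw [step1, step2, step3, lintegral_congr_ae step4,
    lintegral_indicator measurableSet_Ioo,
    ← ofReal_integral_eq_lintegral_ofReal hIoo hnn2, hvalO,
    ENNReal.toReal_ofReal hvnn]
  field_simp

end Aux

section Main
open Real Set

theorem stmt_0 (p : EuclideanSpace ℝ (Fin 2)) (hp : p ≠ 0) :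
    (∫ ξ in Metric.closedBall (0 : EuclideanSpace ℝ (Fin 2)) 1,
        (1 + ⟪(Real.sqrt (1 + ‖p‖ ^ 2))⁻¹ • p, ξ⟫) ^ (-(3 : ℝ) / 2) *
          (1 - ‖ξ‖ ^ 2) ^ (-(1 : ℝ) / 2)) =
      2 * Real.pi / ‖(Real.sqrt (1 + ‖p‖ ^ 2))⁻¹ • p‖ *
        (1 / Real.sqrt (1 - ‖(Real.sqrt (1 + ‖p‖ ^ 2))⁻¹ • p‖) -
          1 / Real.sqrt (1 + ‖(Real.sqrt (1 + ‖p‖ ^ 2))⁻¹ • p‖)) := by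
  set q := (Real.sqrt (1 + ‖p‖ ^ 2))⁻¹ • p with hq
  have hs0 : (0:ℝ) < Real.sqrt (1 + ‖p‖^2) := Real.sqrt_pos.mpr (by positivity)
  have hnq : ‖q‖ = ‖p‖ / Real.sqrt (1 + ‖p‖^2) := by
    rw [hq, norm_smul, norm_inv, Real.norm_eq_abs, abs_of_pos hs0, inv_mul_eq_div]
  have hppos : 0 < ‖p‖ := norm_pos_iff.mpr hp
  have ha0 : 0 < ‖q‖ := by rw [hnq]; exact div_pos hppos hs0
  have ha1 : ‖q‖ < 1 := by
    rw [hnq, div_lt_one hs0]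
    exact (Real.lt_sqrt (norm_nonneg p)).mpr (by linarith)
  have hqne : q ≠ 0 := fun h => by simp [h] at ha0
  set u := ‖q‖⁻¹ • q with hu
  have hun : ‖u‖ = 1 := norm_smul_inv_norm hqne
  have horto : Orthonormal ℝ (({0} : Set (Fin 2)).restrict (fun _ : Fin 2 => u)) := by
    constructor
    · intro i; exact hun
    · intro i j hij
      exact absurd (Subtype.ext (by
        have hi := i.2; have hj := j.2
        simp only [Set.mem_singleton_iff] at hi hj
        rw [hi, hj])) hij
  obtain ⟨b, hb⟩ := horto.exists_orthonormalBasis_extension_of_card_eq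
    (by simp [finrank_euclideanSpace])
  have hb0 : b 0 = u := hb 0 rfl
  have hinner : ∀ ξ : EuclideanSpace ℝ (Fin 2), ⟪q, ξ⟫ = ‖q‖ * b.repr ξ 0 := by
    intro ξ
    have hqu : q = ‖q‖ • u := by rw [hu, smul_inv_smul₀ (ne_of_gt ha0)]
    calc ⟪q, ξ⟫ = ⟪‖q‖ • u, ξ⟫ := by rw [← hqu]
      _ = ‖q‖ * ⟪b 0, ξ⟫ := by rw [real_inner_smul_left, hb0]
      _ = ‖q‖ * b.repr ξ 0 := by rw [b.repr_apply_apply]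
  have hT := b.measurePreserving_repr
  have hTemb : MeasurableEmbedding ⇑b.repr := b.repr.toHomeomorph.measurableEmbedding
  have hball : Metric.closedBall (0 : EuclideanSpace ℝ (Fin 2)) 1
      = ⇑b.repr ⁻¹' Metric.closedBall 0 1 := by
    ext ξ
    simp [Metric.mem_closedBall, dist_zero_right]
  have htrans : (∫ ξ in Metric.closedBall (0 : EuclideanSpace ℝ (Fin 2)) 1,
        (1 + ⟪q, ξ⟫) ^ (-(3:ℝ)/2) * (1 - ‖ξ‖^2) ^ (-(1:ℝ)/2))
      = ∫ η in Metric.closedBall (0 : EuclideanSpace ℝ (Fin 2)) 1,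
        (1 + ‖q‖ * η 0) ^ (-(3:ℝ)/2) * (1 - ‖η‖^2) ^ (-(1:ℝ)/2) := by
    rw [← hT.setIntegral_preimage_emb hTemb
      (fun η : EuclideanSpace ℝ (Fin 2) =>
        (1 + ‖q‖ * η 0) ^ (-(3:ℝ)/2) * (1 - ‖η‖^2) ^ (-(1:ℝ)/2))
      (Metric.closedBall 0 1), ← hball]
    refine setIntegral_congr_fun measurableSet_closedBall ?_
    intro ξ _
    simp only
    rw [hinner ξ, LinearIsometryEquiv.norm_map]
  rw [htrans, aux_key ‖q‖ ha0 ha1]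

end Main
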